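/- Let u ≥ 0 be sufficiently small, and suppose y₃, y₄ ∈ ℝ² satisfy: y₃ lies in the closed lens B((0,0), √2+2u) ∩ B((2,0), √2+2u), y₃ has positive second coordinate, y₄ lies in the same lens, and ‖y₃ − y₄‖ ≥ 2. Then y₄ has negative second coordinate, and there exists a constant β > 0 independent of u such that ‖y₃ − (1,1)‖ ≤ βu and ‖y₄ − (1,−1)‖ ≤ βu. -/
import Mathlib

set_option maxHeartbeats 1000000

/-- The point `(a, b)` of the Euclidean plane. -/
noncomputable def pt (a b : ℝ) : EuclideanSpace ℝ (Fin 2) :=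
  (WithLp.equiv 2 (Fin 2 → ℝ)).symm ![a, b]

lemma norm_sub_pt (x : EuclideanSpace ℝ (Fin 2)) (a b : ℝ) :
    ‖x - pt a b‖ = Real.sqrt ((x 0 - a)^2 + (x 1 - b)^2) := by
  rw [EuclideanSpace.norm_eq]
  simp [Fin.sum_univ_two, pt, Real.norm_eq_abs, sq_abs]

lemma dist_pt (x : EuclideanSpace ℝ (Fin 2)) (a b : ℝ) :
    dist x (pt a b) = Real.sqrt ((x 0 - a)^2 + (x 1 - b)^2) := by
  rw [EuclideanSpace.dist_eq]
  simp [Fin.sum_univ_two, Real.dist_eq, sq_abs, pt]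

lemma sq_le_of_sqrt_le {S r : ℝ} (hS : 0 ≤ S) (h : Real.sqrt S ≤ r) : S ≤ r^2 := by
  nlinarith [Real.sq_sqrt hS, Real.sqrt_nonneg S]

lemma my_le_of_sq_le_sq {a c : ℝ} (hc : 0 ≤ c) (h : a^2 ≤ c^2) : a ≤ c := by
  nlinarith [h, hc]

/-- Pure real-number core of the lens argument. -/
lemma lens_core (u δ x3 q x4 t : ℝ) (hu0 : 0 ≤ u)
    (hδ0 : 0 ≤ δ) (hδ7 : δ ≤ 7 * u) (hδs : δ ≤ 7/100)
    (H30 : x3^2 + q^2 ≤ 2 + δ) (H32 : (x3 - 2)^2 + q^2 ≤ 2 + δ)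
    (H40 : x4^2 + t^2 ≤ 2 + δ) (H42 : (x4 - 2)^2 + t^2 ≤ 2 + δ)
    (hq0 : 0 < q)
    (hd : 4 ≤ (x3 - x4)^2 + (q - t)^2) :
    t < 0 ∧ (x3 - 1)^2 + (q - 1)^2 ≤ (100*u)^2 ∧ (x4 - 1)^2 + (t + 1)^2 ≤ (100*u)^2 := by
  set A : ℝ := |x3 - 1| with hAdef
  set B : ℝ := |x4 - 1| with hBdef
  have hA2 : A^2 = (x3 - 1)^2 := sq_abs _
  have hB2 : B^2 = (x4 - 1)^2 := sq_abs _
  have hA0 : 0 ≤ A := abs_nonneg _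
  have hB0 : 0 ≤ B := abs_nonneg _
  have hA : (1+A)^2 + q^2 ≤ 2 + δ := by
    rcases abs_cases (x3 - 1) with ⟨h, _⟩ | ⟨h, _⟩ <;> rw [hAdef, h]
    · have e : (1+(x3-1))^2 = x3^2 := by ring
      linarith [H30, e]
    · have e : (1+-(x3-1))^2 = (x3-2)^2 := by ring
      linarith [H32, e]
  have hB : (1+B)^2 + t^2 ≤ 2 + δ := by
    rcases abs_cases (x4 - 1) with ⟨h, _⟩ | ⟨h, _⟩ <;> rw [hBdef, h]
    · have e : (1+(x4-1))^2 = x4^2 := by ring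
      linarith [H40, e]
    · have e : (1+-(x4-1))^2 = (x4-2)^2 := by ring
      linarith [H42, e]
  have hps2 : -(A*B) ≤ (x3 - 1) * (x4 - 1) := by
    rw [hAdef, hBdef, ← abs_mul]; exact neg_abs_le _
  have hAB : A + B ≤ δ := by
    have e1 : (q-t)^2 = q^2 + t^2 - 2*(q*t) := by ring
    have e2 : (q+t)^2 = q^2 + t^2 + 2*(q*t) := by ring
    have e3 : (x3-x4)^2 = (x3-1)^2 + (x4-1)^2 - 2*((x3 - 1) * (x4 - 1)) := by ring
    have e4 : (A-B)^2 = A^2 + B^2 - 2*(A*B) := by ring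
    have e5 : (1+A)^2 = 1 + 2*A + A^2 := by ring
    have e6 : (1+B)^2 = 1 + 2*B + B^2 := by ring
    linarith [hA, hB, hd, e1, e2, e3, e4, e5, e6, hps2,
      sq_nonneg (q+t), sq_nonneg (A-B), hA2, hB2]
  have hAδ : A ≤ δ := by linarith
  have hBδ : B ≤ δ := by linarith
  have hq2 : q^2 ≤ 1 + δ := by
    have e : (1+A)^2 = 1 + 2*A + A^2 := by ring
    linarith [hA, hA0, sq_nonneg A, e]
  have ht2 : t^2 ≤ 1 + δ := by
    have e : (1+B)^2 = 1 + 2*B + B^2 := by ring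
    linarith [hB, hB0, sq_nonneg B, e]
  have hδ2 : δ^2 ≤ δ := by
    have h := mul_nonneg (sub_nonneg.mpr hδs) hδ0
    have e : (7/100 - δ)*δ = (7/100)*δ - δ^2 := by ring
    linarith [h, e]
  have hδh : δ^2 ≤ δ/2 := by
    have h := mul_nonneg (sub_nonneg.mpr hδs) hδ0
    have e : (7/100 - δ)*δ = (7/100)*δ - δ^2 := by ring
    linarith [h, e]
  have hδ4 : δ^4 ≤ δ^2 := by
    have h := mul_le_mul hδ2 hδ2 (sq_nonneg δ) hδ0
    have e : δ^2*δ^2 = δ^4 := by ring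
    have e2 : δ*δ = δ^2 := by ring
    linarith [h, e, e2]
  have hsq1 : q^2 ≤ (1 + δ/2)^2 := by
    have e : (1+δ/2)^2 = 1 + δ + δ^2/4 := by ring
    linarith [hq2, sq_nonneg δ, e]
  have hsq2 : t^2 ≤ (1 + δ/2)^2 := by
    have e : (1+δ/2)^2 = 1 + δ + δ^2/4 := by ring
    linarith [ht2, sq_nonneg δ, e]
  have hqup : q ≤ 1 + δ/2 := my_le_of_sq_le_sq (by linarith) hsq1
  have htup : t ≤ 1 + δ/2 := my_le_of_sq_le_sq (by linarith) hsq2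
  have htlow : -(1 + δ/2) ≤ t := by
    have h := my_le_of_sq_le_sq (show (0:ℝ) ≤ 1 + δ/2 by linarith)
      (show (-t)^2 ≤ (1+δ/2)^2 by rw [neg_pow]; simpa using hsq2)
    linarith
  have hABsq : (A+B)^2 ≤ δ^2 := by
    have h := mul_le_mul hAB hAB (by linarith) hδ0
    have e : (A+B)*(A+B) = (A+B)^2 := by ring
    have e2 : δ*δ = δ^2 := by ring
    linarith [h, e, e2]
  have hx34 : (x3 - x4)^2 ≤ δ^2 := by
    have e3 : (x3-x4)^2 = (x3-1)^2 + (x4-1)^2 - 2*((x3 - 1) * (x4 - 1)) := by ring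
    have e4 : (A+B)^2 = A^2 + B^2 + 2*(A*B) := by ring
    linarith [e3, e4, hps2, hA2, hB2, hABsq]
  have hqt2 : 4 - δ^2 ≤ (q - t)^2 := by linarith [hd, hx34]
  have hsum : 0 < 2 - δ^2 + (q - t) := by linarith [htup, hq0, hδ2, hδs]
  have hqt : 2 - δ^2 ≤ q - t := by
    by_contra h
    push_neg at h
    have hprod := mul_pos (show (0:ℝ) < 2 - δ^2 - (q - t) by linarith) hsum
    have e : (2 - δ^2 - (q-t))*(2 - δ^2 + (q-t)) = 4 - 4*δ^2 + δ^4 - (q-t)^2 := by ring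
    linarith [hprod, e, hqt2, hδ4, sq_nonneg δ]
  have ht0 : t < 0 := by linarith [hqt, hqup, hδh, hδs]
  have hqa : 1 - δ ≤ q := by linarith [hqt, htlow, hδh]
  have hta : t ≤ -1 + δ := by linarith [hqt, hqup, hδh]
  have htb : -1 - δ ≤ t := by linarith
  have hqb : q ≤ 1 + δ := by linarith
  have hδ2u : δ^2 ≤ 49*u^2 := by
    have h := mul_le_mul hδ7 hδ7 hδ0 (by linarith : (0:ℝ) ≤ 7*u)
    have e : δ*δ = δ^2 := by ring
    have e2 : (7*u)*(7*u) = 49*u^2 := by ring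
    linarith [h, e, e2]
  have hq1sq : (q-1)^2 ≤ δ^2 := sq_le_sq' (by linarith) (by linarith)
  have ht1sq : (t+1)^2 ≤ δ^2 := sq_le_sq' (by linarith) (by linarith)
  have hAsq : (x3-1)^2 ≤ δ^2 := by rw [← hA2]; exact sq_le_sq' (by linarith) hAδ
  have hBsq : (x4-1)^2 ≤ δ^2 := by rw [← hB2]; exact sq_le_sq' (by linarith) hBδ
  have efin : (100*u)^2 = 10000*u^2 := by ring
  exact ⟨ht0, by linarith [hAsq, hq1sq, hδ2u, sq_nonneg u, efin],
    by linarith [hBsq, ht1sq, hδ2u, sq_nonneg u, efin]⟩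

theorem stmt_10 :
    ∃ β : ℝ, 0 < β ∧ ∃ u₀ : ℝ, 0 < u₀ ∧
      ∀ u : ℝ, 0 ≤ u → u ≤ u₀ →
      ∀ y₃ y₄ : EuclideanSpace ℝ (Fin 2),
        y₃ ∈ Metric.closedBall (pt 0 0) (Real.sqrt 2 + 2 * u) ∩
              Metric.closedBall (pt 2 0) (Real.sqrt 2 + 2 * u) →
        0 < y₃ 1 →
        y₄ ∈ Metric.closedBall (pt 0 0) (Real.sqrt 2 + 2 * u) ∩
              Metric.closedBall (pt 2 0) (Real.sqrt 2 + 2 * u) →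
        2 ≤ ‖y₃ - y₄‖ →
        y₄ 1 < 0 ∧ ‖y₃ - pt 1 1‖ ≤ β * u ∧ ‖y₄ - pt 1 (-1)‖ ≤ β * u := by
  refine ⟨100, by norm_num, 1/100, by norm_num, ?_⟩
  intro u hu0 hu1 y₃ y₄ hy3 hq0 hy4 hdist
  obtain ⟨h30, h32⟩ := hy3
  obtain ⟨h40, h42⟩ := hy4
  have hs2 : (Real.sqrt 2)^2 = 2 := Real.sq_sqrt (by norm_num)
  have hs2n : 0 ≤ Real.sqrt 2 := Real.sqrt_nonneg 2
  have hs2a : 1 ≤ Real.sqrt 2 := by nlinarith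
  have hs2b : Real.sqrt 2 ≤ 3/2 := by nlinarith
  set δ : ℝ := 4 * Real.sqrt 2 * u + 4 * u^2 with hδdef
  have hδ0 : 0 ≤ δ := by positivity
  have hδ7 : δ ≤ 7 * u := by nlinarith
  have hδs : δ ≤ 7/100 := by nlinarith
  have hr2 : (Real.sqrt 2 + 2*u)^2 = 2 + δ := by rw [add_sq, hs2]; ring
  rw [Metric.mem_closedBall, dist_pt] at h30 h32 h40 h42
  have H30 : (y₃ 0)^2 + (y₃ 1)^2 ≤ 2 + δ := by
    have := sq_le_of_sqrt_le (by positivity) h30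
    rw [hr2] at this; convert this using 2 <;> ring
  have H32 : (y₃ 0 - 2)^2 + (y₃ 1)^2 ≤ 2 + δ := by
    have := sq_le_of_sqrt_le (by positivity) h32
    rw [hr2] at this; convert this using 2 <;> ring
  have H40 : (y₄ 0)^2 + (y₄ 1)^2 ≤ 2 + δ := by
    have := sq_le_of_sqrt_le (by positivity) h40
    rw [hr2] at this; convert this using 2 <;> ring
  have H42 : (y₄ 0 - 2)^2 + (y₄ 1)^2 ≤ 2 + δ := by
    have := sq_le_of_sqrt_le (by positivity) h42
    rw [hr2] at this; convert this using 2 <;> ring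
  have hd : 4 ≤ (y₃ 0 - y₄ 0)^2 + (y₃ 1 - y₄ 1)^2 := by
    have hn : ‖y₃ - y₄‖ = Real.sqrt ((y₃ 0 - y₄ 0)^2 + (y₃ 1 - y₄ 1)^2) := by
      rw [EuclideanSpace.norm_eq]
      simp [Fin.sum_univ_two, Real.norm_eq_abs, sq_abs]
    rw [hn] at hdist
    have hS : (0:ℝ) ≤ (y₃ 0 - y₄ 0)^2 + (y₃ 1 - y₄ 1)^2 := by positivity
    nlinarith [Real.sq_sqrt hS, hdist]
  obtain ⟨ht0, hb3, hb4⟩ :=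
    lens_core u δ (y₃ 0) (y₃ 1) (y₄ 0) (y₄ 1) hu0 hδ0 hδ7 hδs H30 H32 H40 H42 hq0 hd
  refine ⟨ht0, ?_, ?_⟩
  · rw [norm_sub_pt]
    calc Real.sqrt ((y₃ 0 - 1)^2 + (y₃ 1 - 1)^2)
        ≤ Real.sqrt ((100*u)^2) := Real.sqrt_le_sqrt hb3
      _ = 100*u := Real.sqrt_sq (by positivity)
  · rw [norm_sub_pt]
    calc Real.sqrt ((y₄ 0 - 1)^2 + (y₄ 1 - (-1))^2)
        ≤ Real.sqrt ((100*u)^2) := by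
          apply Real.sqrt_le_sqrt; convert hb4 using 2; ring
      _ = 100*u := Real.sqrt_sq (by positivity)
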